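/- arXiv:2008.05719 — 6 statements merged into one kernel-verified Lean document; each statement's English description precedes it below -/
import Mathlib

section
/- Let A ↪ A' and B ↪ B' be injections of Noetherian local integral domains, with surjections α : A → B and α' : A' → B' forming a Cartesian (pullback) square, and suppose B' is the fraction field of B. Let 𝔭 = ker(α). Then A' is the localization A_𝔭 of A at 𝔭. -/
/-- Let `A ↪ A'` and `B ↪ B'` be injections of Noetherian local integral
domains, with surjections `α : A → B` and `α' : A' → B'` forming a Cartesian (pullback)
square, and suppose `B'` is the fraction field of `B`.  Let `𝔭 = ker α`.  Then `A'` is the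
localization `A_𝔭` of `A` at `𝔭`. -/
theorem cartesian_square_localization_at_prime
    (A A' B B' : Type*) [CommRing A] [CommRing A'] [CommRing B] [CommRing B']
    [IsDomain A] [IsDomain A'] [IsDomain B] [IsDomain B']
    [IsNoetherianRing A] [IsNoetherianRing A'] [IsNoetherianRing B] [IsNoetherianRing B']
    [IsLocalRing A] [IsLocalRing A'] [IsLocalRing B] [IsLocalRing B']
    [Algebra A A'] [Algebra B B'] [IsFractionRing B B']
    (α : A →+* B) (α' : A' →+* B')
    (hα : Function.Surjective α) (hα' : Function.Surjective α')
    (hinj : Function.Injective (algebraMap A A'))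
    (hcomm : α'.comp (algebraMap A A') = (algebraMap B B').comp α)
    (hcart : ∀ (a' : A') (b : B), α' a' = algebraMap B B' b →
      ∃! a : A, algebraMap A A' a = a' ∧ α a = b)
    [hP : (RingHom.ker α).IsPrime] :
    IsLocalization (RingHom.ker α).primeCompl A' := by
  have hcomm' : ∀ a : A, α' (algebraMap A A' a) = algebraMap B B' (α a) := fun a =>
    RingHom.congr_fun hcomm a
  have hker : ∀ q : A', α' q = 0 → ¬ IsUnit q := by
    intro q hq hu
    obtain ⟨u, rfl⟩ := hu
    have h1 : (α' ↑u) * (α' ↑u⁻¹) = 1 := by rw [← map_mul, Units.mul_inv, map_one]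
    rw [hq, zero_mul] at h1
    exact zero_ne_one h1
  constructor
  constructor
  · -- map_units'
    rintro ⟨s, hs⟩
    have hαs : α s ≠ 0 := fun h => hs (by simpa [RingHom.mem_ker] using h)
    obtain ⟨x', hx'⟩ := hα' (IsLocalization.mk' B' (1 : B)
      ⟨α s, mem_nonZeroDivisors_of_ne_zero hαs⟩)
    have h1 : α' (algebraMap A A' s * x') = 1 := by
      rw [map_mul, hcomm', hx', mul_comm,
        IsLocalization.mk'_spec B' (1 : B) ⟨α s, mem_nonZeroDivisors_of_ne_zero hαs⟩, map_one]
    obtain ⟨p, ⟨hp1, hp2⟩, -⟩ := hcart (algebraMap A A' s * x' - 1) 0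
      (by rw [map_sub, h1, map_one, sub_self, map_zero])
    have hpnu : ¬ IsUnit (-(algebraMap A A' p)) :=
      hker _ (by simp [hcomm', hp2])
    have hsum : IsUnit (algebraMap A A' s * x' + -(algebraMap A A' p)) := by
      rw [hp1]; simp
    rcases IsLocalRing.isUnit_or_isUnit_of_isUnit_add hsum with h | h
    · exact isUnit_of_mul_isUnit_left h
    · exact absurd h hpnu
  · -- surj'
    intro z
    obtain ⟨⟨b, s⟩, hb⟩ := IsLocalization.surj (nonZeroDivisors B) (α' z)
    obtain ⟨s₀, hs₀⟩ := hα (s : B)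
    have hs₀mem : s₀ ∈ (RingHom.ker α).primeCompl := by
      intro h
      have h0 : α s₀ = 0 := h
      exact nonZeroDivisors.ne_zero s.2 (by rw [← hs₀, h0])
    obtain ⟨a, ⟨ha1, -⟩, -⟩ := hcart (z * algebraMap A A' s₀) b
      (by rw [map_mul, hcomm', hs₀]; exact hb)
    exact ⟨(a, ⟨s₀, hs₀mem⟩), by simpa using ha1.symm⟩
  · -- exists_of_eq
    intro a₁ a₂ h
    exact ⟨1, by rw [hinj h]⟩
end

section
/- Let G be the direct sum of a family of topological abelian groups {G_i}_{i ∈ I}, each carrying a subgroup topology (a topology generated by a family of open subgroups), and endow G with the direct sum topology. Then G is a coproduct in the category of topological abelian groups with subgroup topology: for any topological abelian group H with subgroup topology and any family of continuous homomorphisms f_i : G_i → H, there is a unique continuous homomorphism f : G → H with f|_{G_i} = f_i for all i. -/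
open DirectSum

/-- Let `G = ⨁ i, G i` be the direct sum of a family of topological abelian
groups, each carrying a subgroup topology, and endow `G` with the direct sum topology
(generated by the open subgroups `⨁ i, U i` where each `U i` is an open subgroup of `G i`).
Then `G` is a coproduct in the category of topological abelian groups with subgroup
topology: for any topological abelian group `H` with subgroup topology and any family of
continuous homomorphisms `f i : G i → H`, there is a unique continuous homomorphism
`f : G → H` with `f ∘ (inclusion of G i) = f i` for all `i`. -/
theorem directSum_is_coproduct_of_subgroup_topologies
    {I : Type*} [DecidableEq I] (G : I → Type*) [∀ i, AddCommGroup (G i)]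
    [∀ i, TopologicalSpace (G i)] [∀ i, IsTopologicalAddGroup (G i)]
    -- each `G i` has the subgroup topology
    (hG : ∀ i, (nhds (0 : G i)).HasBasis
      (fun S : AddSubgroup (G i) => IsOpen (S : Set (G i)))
      (fun S : AddSubgroup (G i) => (S : Set (G i))))
    -- the direct sum carries the direct sum topology: the subgroups
    -- `{x | ∀ i, x i ∈ U i}` with each `U i` an open subgroup form a basis of `𝓝 0`
    [TopologicalSpace (⨁ i, G i)] [IsTopologicalAddGroup (⨁ i, G i)]
    (hDS : (nhds (0 : ⨁ i, G i)).HasBasis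
      (fun U : ∀ i, AddSubgroup (G i) => ∀ i, IsOpen ((U i : Set (G i))))
      (fun U : ∀ i, AddSubgroup (G i) => {x : ⨁ i, G i | ∀ i, x i ∈ U i}))
    -- a target topological abelian group with subgroup topology
    {H : Type*} [AddCommGroup H] [TopologicalSpace H] [IsTopologicalAddGroup H]
    (hH : (nhds (0 : H)).HasBasis (fun S : AddSubgroup H => IsOpen (S : Set H))
      (fun S : AddSubgroup H => (S : Set H)))
    (f : ∀ i, G i →+ H) (hf : ∀ i, Continuous (f i)) :
    ∃! F : (⨁ i, G i) →+ H, Continuous F ∧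
      ∀ (i : I) (x : G i), F (DirectSum.of G i x) = f i x := by
  classical
  refine ⟨DirectSum.toAddMonoid f, ⟨?_, ?_⟩, ?_⟩
  · -- continuity
    apply continuous_of_continuousAt_zero (DirectSum.toAddMonoid f)
    rw [ContinuousAt, map_zero]
    rw [hDS.tendsto_iff hH]
    intro S hS
    refine ⟨fun i => S.comap (f i), fun i => ?_, fun x hx => ?_⟩
    · exact (hS.preimage (hf i))
    · show DirectSum.toAddMonoid f x ∈ S
      rw [DirectSum.toAddMonoid, DFinsupp.liftAddHom_apply]
      erw [DFinsupp.sumAddHom_apply]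
      exact AddSubgroup.sum_mem S fun i _ => hx i
  · intro i x
    exact DirectSum.toAddMonoid_of f i x
  · intro F ⟨_, hF⟩
    ext i x
    simp [hF]
end

section
/- Let K be a Henselian discrete valuation field, let m ≥ 0 and n ≥ 1 be integers. Then there are inclusions of subgroups of the Milnor K-group: U_{m+1}K^M_n(K) ⊆ U'_m K^M_n(K) ⊆ U_m K^M_n(K). -/
/-- The subgroup of relations defining Milnor K-theory: multilinearity and the
Steinberg relation. -/
def MilnorRel (K : Type*) [Field K] (n : ℕ) :
    AddSubgroup (FreeAbelianGroup (Fin n → Kˣ)) :=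
  AddSubgroup.closure
    ({z | ∃ (x : Fin n → Kˣ) (i : Fin n) (a b : Kˣ),
        z = FreeAbelianGroup.of (Function.update x i (a * b)) -
            FreeAbelianGroup.of (Function.update x i a) -
            FreeAbelianGroup.of (Function.update x i b)} ∪
     {z | ∃ (x : Fin n → Kˣ) (i j : Fin n), i ≠ j ∧ ((x i : K) + (x j : K) = 1) ∧
        z = FreeAbelianGroup.of x})

/-- The `n`-th Milnor K-group `K^M_n(K)` of a field `K`. -/
def MilnorK (K : Type*) [Field K] (n : ℕ) : Type _ :=
  FreeAbelianGroup (Fin n → Kˣ) ⧸ MilnorRel K n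

noncomputable instance (K : Type*) [Field K] (n : ℕ) : AddCommGroup (MilnorK K n) :=
  inferInstanceAs (AddCommGroup (FreeAbelianGroup (Fin n → Kˣ) ⧸ MilnorRel K n))

/-- The Milnor symbol `{x 0, …, x (n-1)}` in `K^M_n(K)`. -/
def MilnorK.symbol {K : Type*} [Field K] {n : ℕ} (x : Fin n → Kˣ) : MilnorK K n :=
  QuotientAddGroup.mk (FreeAbelianGroup.of x)

section DVR

variable (A : Type*) [CommRing A] [IsDomain A] [IsDiscreteValuationRing A]
variable (K : Type*) [Field K] [Algebra A K] [IsFractionRing A K]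

/-- The unit group `O_K^× ⊆ K^×` of the valuation ring. -/
noncomputable def unitGroup : Subgroup Kˣ :=
  (Units.map (algebraMap A K : A →* K)).range

/-- The higher unit group `U_m(K) = 1 + 𝔪_K^m` (with `U_0(K) = O_K^×`), as a subgroup
of `K^×` (it is the subgroup generated — indeed, consisting — of the units `v` of `O_K`
with `v - 1 ∈ 𝔪_K^m`). -/
noncomputable def Um (m : ℕ) : Subgroup Kˣ :=
  Subgroup.closure {u : Kˣ | ∃ v : Aˣ, algebraMap A K (v : A) = (u : K) ∧
    ((v : A) - 1) ∈ (IsLocalRing.maximalIdeal A) ^ m}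

/-- `U_m K^M_{n+1}(K) = {U_m(K), K^×, …, K^×}`. -/
noncomputable def UmKM (m n : ℕ) : AddSubgroup (MilnorK K (n + 1)) :=
  AddSubgroup.closure
    {z | ∃ x : Fin (n + 1) → Kˣ, x 0 ∈ Um A K m ∧ z = MilnorK.symbol x}

/-- `U'_m K^M_{n+1}(K) = {U_m(K), O_K^×, …, O_K^×}`. -/
noncomputable def UmKM' (m n : ℕ) : AddSubgroup (MilnorK K (n + 1)) :=
  AddSubgroup.closure
    {z | ∃ x : Fin (n + 1) → Kˣ, x 0 ∈ Um A K m ∧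
      (∀ i : Fin (n + 1), i ≠ 0 → x i ∈ unitGroup A K) ∧ z = MilnorK.symbol x}

end DVR


section Aux

attribute [local instance] Classical.propDecidable
set_option maxHeartbeats 1000000
set_option linter.unusedSectionVars false
set_option linter.unusedVariables false



variable {K : Type*} [Field K] {n : ℕ}

lemma symbol_mul (x : Fin n → Kˣ) (i : Fin n) (a b : Kˣ) :
    MilnorK.symbol (K := K) (Function.update x i (a * b)) =
      MilnorK.symbol (Function.update x i a) + MilnorK.symbol (Function.update x i b) := by
  have h : FreeAbelianGroup.of (Function.update x i (a * b)) -
      FreeAbelianGroup.of (Function.update x i a) -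
      FreeAbelianGroup.of (Function.update x i b) ∈ MilnorRel K n :=
    AddSubgroup.subset_closure (Or.inl ⟨x, i, a, b, rfl⟩)
  have h2 : (QuotientAddGroup.mk (s := MilnorRel K n)
      (FreeAbelianGroup.of (Function.update x i (a * b)) -
       FreeAbelianGroup.of (Function.update x i a) -
       FreeAbelianGroup.of (Function.update x i b))) = 0 :=
    (QuotientAddGroup.eq_zero_iff _).mpr h
  rw [QuotientAddGroup.mk_sub, QuotientAddGroup.mk_sub, sub_sub, sub_eq_zero] at h2
  exact h2

lemma symbol_steinberg (x : Fin n → Kˣ) (i j : Fin n) (hij : i ≠ j)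
    (h : (x i : K) + (x j : K) = 1) : MilnorK.symbol x = 0 :=
  (QuotientAddGroup.eq_zero_iff _).mpr
    (AddSubgroup.subset_closure (Or.inr ⟨x, i, j, hij, h, rfl⟩))

lemma symbol_of_eq_one (x : Fin n → Kˣ) (i : Fin n) (h : x i = 1) :
    MilnorK.symbol (K := K) x = 0 := by
  have h2 := symbol_mul x i 1 1
  have h3 : Function.update x i (1 : Kˣ) = x := by
    rw [← h]; exact Function.update_eq_self i x
  rw [mul_one, h3] at h2
  exact left_eq_add.mp h2

lemma symbol_inv (x : Fin n → Kˣ) (i : Fin n) (a : Kˣ) :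
    MilnorK.symbol (K := K) (Function.update x i a⁻¹) =
      - MilnorK.symbol (Function.update x i a) := by
  have h2 := symbol_mul x i a a⁻¹
  have h0 : MilnorK.symbol (K := K) (Function.update x i (a * a⁻¹)) = 0 :=
    symbol_of_eq_one _ i (by simp)
  rw [h0] at h2
  exact eq_neg_of_add_eq_zero_right h2.symm

lemma symbol_pow (x : Fin n → Kˣ) (i : Fin n) (a : Kˣ) (k : ℕ) :
    MilnorK.symbol (K := K) (Function.update x i (a ^ k)) =
      k • MilnorK.symbol (Function.update x i a) := by
  induction k with
  | zero => rw [pow_zero, zero_smul]; exact symbol_of_eq_one _ i (by simp)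
  | succ k ih => rw [pow_succ, symbol_mul, ih, succ_nsmul]

lemma symbol_zpow (x : Fin n → Kˣ) (i : Fin n) (a : Kˣ) (k : ℤ) :
    MilnorK.symbol (K := K) (Function.update x i (a ^ k)) =
      k • MilnorK.symbol (Function.update x i a) := by
  cases k with
  | ofNat k => simpa using symbol_pow x i a k
  | negSucc k =>
      rw [zpow_negSucc, symbol_inv, symbol_pow, negSucc_zsmul]

lemma symbol_of_neg (x : Fin n → Kˣ) (i j : Fin n) (hij : i ≠ j)
    (h : (x j : K) = -(x i : K)) : MilnorK.symbol (K := K) x = 0 := by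
  by_cases h1 : x i = 1
  · exact symbol_of_eq_one x i h1
  · have hy1 : (x i : K) ≠ 1 := fun hc => h1 (Units.ext hc)
    have hy0 : (x i : K) ≠ 0 := (x i).ne_zero
    have h1y : (1 : K) - (x i : K) ≠ 0 := sub_ne_zero.mpr (Ne.symm hy1)
    have hyinv : (1 : K) - ((x i : K))⁻¹ ≠ 0 :=
      sub_ne_zero.mpr (fun hc => hy1 (inv_eq_one.mp hc.symm))
    set u1 : Kˣ := Units.mk0 _ h1y with hu1
    set u2 : Kˣ := Units.mk0 _ hyinv with hu2
    have hxj : x j = u1 * u2⁻¹ := by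
      apply Units.ext
      rw [Units.val_mul, h, hu1, hu2]
      rw [Units.val_inv_eq_inv_val, Units.val_mk0, Units.val_mk0]
      rw [← div_eq_mul_inv, eq_comm, div_eq_iff hyinv]
      field_simp
      ring
    have hxx : Function.update x j (u1 * u2⁻¹) = x := by
      rw [← hxj]; exact Function.update_eq_self j x
    have hs := symbol_mul x j u1 u2⁻¹
    rw [hxx] at hs
    have e1 : MilnorK.symbol (Function.update x j u1) = 0 := by
      apply symbol_steinberg _ i j hij
      rw [Function.update_of_ne hij, Function.update_self, hu1, Units.val_mk0]
      ring
    have e2 := symbol_inv x j u2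
    have e3 : MilnorK.symbol (Function.update x j u2) = 0 := by
      set X := Function.update x j u2 with hX
      have hXi : X i = x i := Function.update_of_ne hij _ _
      have h4 : Function.update X i ((x i)⁻¹)⁻¹ = X := by
        rw [inv_inv, ← hXi]; exact Function.update_eq_self i X
      have h5 := symbol_inv X i ((x i)⁻¹)
      rw [h4] at h5
      have e4 : MilnorK.symbol (Function.update X i (x i)⁻¹) = 0 := by
        apply symbol_steinberg _ i j hij
        rw [Function.update_self, Function.update_of_ne (Ne.symm hij), hX,
          Function.update_self, hu2, Units.val_mk0, Units.val_inv_eq_inv_val]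
        ring
      rw [e4, neg_zero] at h5
      exact h5
    rw [e1, e2, e3, neg_zero, add_zero] at hs
    exact hs



variable {A : Type*} [CommRing A] [IsDomain A] [IsDiscreteValuationRing A]
variable {K : Type*} [Field K] [Algebra A K] [IsFractionRing A K]



lemma mem_unitGroup_of_val {u : Kˣ} (c : Aˣ) (h : algebraMap A K (c : A) = (u : K)) :
    u ∈ unitGroup A K :=
  ⟨c, Units.ext (by simpa using h)⟩

lemma neg_one_mem_unitGroup : (-1 : Kˣ) ∈ unitGroup A K :=
  mem_unitGroup_of_val (-1) (by simp)

lemma mem_Um_iff {m : ℕ} {u : Kˣ} :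
    u ∈ Um A K m ↔ ∃ v : Aˣ, algebraMap A K (v : A) = (u : K) ∧
      ((v : A) - 1) ∈ (IsLocalRing.maximalIdeal A) ^ m := by
  constructor
  · intro h
    induction h using Subgroup.closure_induction with
    | mem x hx => exact hx
    | one => exact ⟨1, by simp, by simp⟩
    | mul a b ha hb iha ihb =>
        obtain ⟨v, hv, hv1⟩ := iha
        obtain ⟨w, hw, hw1⟩ := ihb
        refine ⟨v * w, ?_, ?_⟩
        · rw [Units.val_mul, map_mul, hv, hw, Units.val_mul]
        · have he : ((v * w : Aˣ) : A) - 1 = (v : A) * ((w : A) - 1) + ((v : A) - 1) := by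
            rw [Units.val_mul]; ring
          rw [he]
          exact add_mem (Ideal.mul_mem_left _ _ hw1) hv1
    | inv a ha iha =>
        obtain ⟨v, hv, hv1⟩ := iha
        have h3 : ((v⁻¹ : Aˣ) : A) * (v : A) = 1 := Units.inv_mul v
        refine ⟨v⁻¹, ?_, ?_⟩
        · have h2 : algebraMap A K ((v⁻¹ : Aˣ) : A) * algebraMap A K ((v : Aˣ) : A) = 1 := by
            rw [← map_mul, h3, map_one]
          rw [hv] at h2
          rw [eq_inv_of_mul_eq_one_left h2]
          simp
        · have he : ((v⁻¹ : Aˣ) : A) - 1 = -(((v⁻¹ : Aˣ) : A) * ((v : A) - 1)) := by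
            linear_combination h3
          rw [he]
          exact neg_mem (Ideal.mul_mem_left _ _ hv1)
  · rintro ⟨v, hv, hv1⟩
    exact Subgroup.subset_closure ⟨v, hv, hv1⟩

lemma Um_mono {m : ℕ} : Um A K (m + 1) ≤ Um A K m :=
  Subgroup.closure_mono (fun u ⟨v, h1, h2⟩ =>
    ⟨v, h1, Ideal.pow_le_pow_right (Nat.le_succ m) h2⟩)

lemma exists_decomp {ϖ : A} (hϖ : Irreducible ϖ) (y : Kˣ) :
    ∃ (c : Aˣ) (k : ℤ), (y : K) = algebraMap A K (c : A) * (algebraMap A K ϖ) ^ k := by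
  obtain ⟨p, q, hq, hpq⟩ := IsFractionRing.div_surjective (A := A) (y : K)
  have hq0 : q ≠ 0 := nonZeroDivisors.ne_zero hq
  have hp0 : p ≠ 0 := by
    intro hc
    apply y.ne_zero
    rw [← hpq, hc, map_zero, zero_div]
  obtain ⟨k1, c1, hc1⟩ := IsDiscreteValuationRing.eq_unit_mul_pow_irreducible hp0 hϖ
  obtain ⟨k2, c2, hc2⟩ := IsDiscreteValuationRing.eq_unit_mul_pow_irreducible hq0 hϖ
  have hπ0 : algebraMap A K ϖ ≠ 0 := by
    rw [map_ne_zero_iff _ (IsFractionRing.injective A K)]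
    exact hϖ.ne_zero
  have hc2K : algebraMap A K (c2 : A) ≠ 0 := by
    rw [map_ne_zero_iff _ (IsFractionRing.injective A K)]
    exact c2.ne_zero
  refine ⟨c1 * c2⁻¹, (k1 : ℤ) - (k2 : ℤ), ?_⟩
  have hinv : algebraMap A K ((c2⁻¹ : Aˣ) : A) * algebraMap A K ((c2 : Aˣ) : A) = 1 := by
    rw [← map_mul, Units.inv_mul, map_one]
  rw [← hpq, hc1, hc2, Units.val_mul, map_mul, map_mul, map_mul, map_pow, map_pow,
    zpow_sub₀ hπ0, zpow_natCast, zpow_natCast]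
  rw [eq_inv_of_mul_eq_one_left hinv]
  field_simp


lemma gen_mem {m n : ℕ} (x : Fin (n + 1) → Kˣ) (h0 : x 0 ∈ Um A K m)
    (hu : ∀ i : Fin (n + 1), i ≠ 0 → x i ∈ unitGroup A K) :
    MilnorK.symbol x ∈ UmKM' A K m n :=
  AddSubgroup.subset_closure ⟨x, h0, hu, rfl⟩


lemma lemB {m n : ℕ} {ϖ : A} (hϖ : Irreducible ϖ) (x : Fin (n + 1) → Kˣ)
    (i : Fin (n + 1)) (hi : i ≠ 0) (hx0 : x 0 ∈ Um A K (m + 1))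
    (hunits : ∀ j : Fin (n + 1), j ≠ 0 → j ≠ i → x j ∈ unitGroup A K)
    (hxi : (x i : K) = algebraMap A K ϖ) :
    MilnorK.symbol x ∈ UmKM' A K m n := by
  have inj : Function.Injective (algebraMap A K) := IsFractionRing.injective A K
  obtain ⟨v, hv, hv1⟩ := mem_Um_iff.mp hx0
  have hspan : IsLocalRing.maximalIdeal A = Ideal.span {ϖ} :=
    (IsDiscreteValuationRing.irreducible_iff_uniformizer ϖ).mp hϖ
  rw [hspan, Ideal.span_singleton_pow] at hv1
  obtain ⟨a, ha⟩ := Ideal.mem_span_singleton'.mp hv1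
  set t : A := a * ϖ ^ m with htdef
  have htv : (v : A) = 1 + ϖ * t := by rw [htdef]; linear_combination -ha
  have htI : t ∈ (IsLocalRing.maximalIdeal A) ^ m := by
    rw [hspan, Ideal.span_singleton_pow]
    exact Ideal.mem_span_singleton'.mpr ⟨a, rfl⟩
  by_cases ht0 : t = 0
  · have hx01 : x 0 = 1 := by
      apply Units.ext
      rw [← hv, htv, ht0, mul_zero, add_zero, map_one, Units.val_one]
    rw [symbol_of_eq_one x 0 hx01]
    exact zero_mem _
  · have hπ0 : algebraMap A K ϖ ≠ 0 := by
      rw [map_ne_zero_iff _ inj]; exact hϖ.ne_zero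
    have htK0 : algebraMap A K t ≠ 0 := by rw [map_ne_zero_iff _ inj]; exact ht0
    set T : Kˣ := Units.mk0 (algebraMap A K t) htK0 with hT
    have huval : (x 0 : K) = 1 + algebraMap A K ϖ * algebraMap A K t := by
      rw [← hv, htv, map_add, map_one, map_mul]
    have h1u : (1 : K) - (x 0 : K) ≠ 0 := by
      rw [huval]
      intro hc
      apply mul_ne_zero hπ0 htK0
      linear_combination -hc
    set U1 : Kˣ := Units.mk0 _ h1u with hU1
    have hdecomp : x i = U1 * (-T)⁻¹ := by
      apply Units.ext
      rw [Units.val_mul, Units.val_inv_eq_inv_val, Units.val_neg, hU1, Units.val_mk0,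
        hT, Units.val_mk0, hxi, huval, ← div_eq_mul_inv, eq_comm,
        div_eq_iff (neg_ne_zero.mpr htK0)]
      ring
    have hupd : Function.update x i (U1 * (-T)⁻¹) = x := by
      rw [← hdecomp]; exact Function.update_eq_self i x
    have hs := symbol_mul x i U1 ((-T)⁻¹)
    rw [hupd] at hs
    have e1 : MilnorK.symbol (Function.update x i U1) = 0 := by
      apply symbol_steinberg _ 0 i (Ne.symm hi)
      rw [Function.update_of_ne (Ne.symm hi), Function.update_self, hU1, Units.val_mk0]
      ring
    have e2 := symbol_inv x i (-T)
    have hsplit := symbol_mul x i (-1 : Kˣ) T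
    rw [neg_one_mul] at hsplit
    have hx0m : x 0 ∈ Um A K m := Um_mono hx0
    have g1 : MilnorK.symbol (Function.update x i (-1 : Kˣ)) ∈ UmKM' A K m n := by
      apply gen_mem
      · rw [Function.update_of_ne (Ne.symm hi)]; exact hx0m
      · intro j hj
        by_cases hji : j = i
        · rw [hji, Function.update_self]; exact neg_one_mem_unitGroup
        · rw [Function.update_of_ne hji]; exact hunits j hj hji
    have gT : MilnorK.symbol (Function.update x i T) ∈ UmKM' A K m n := by
      by_cases hut : IsUnit t
      · have hTu : T ∈ unitGroup A K :=
          mem_unitGroup_of_val hut.unit (by rw [hut.unit_spec, hT, Units.val_mk0])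
        apply gen_mem
        · rw [Function.update_of_ne (Ne.symm hi)]; exact hx0m
        · intro j hj
          by_cases hji : j = i
          · rw [hji, Function.update_self]; exact hTu
          · rw [Function.update_of_ne hji]; exact hunits j hj hji
      · have htm : t ∈ IsLocalRing.maximalIdeal A := hut
        have hϖm : ϖ ∈ IsLocalRing.maximalIdeal A := by
          rw [hspan]; exact Ideal.mem_span_singleton_self ϖ
        have hone : (1 : A) ∉ IsLocalRing.maximalIdeal A := by
          intro h1
          exact (IsLocalRing.maximalIdeal.isMaximal A).ne_top
            (Ideal.eq_top_of_isUnit_mem _ h1 isUnit_one)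
        have he : IsUnit ((1 : A) + t) := by
          by_contra hc
          have h2 : (1 : A) + t ∈ IsLocalRing.maximalIdeal A := hc
          apply hone
          have := Ideal.sub_mem _ h2 htm
          simpa using this
        have hd : IsUnit ((1 : A) - ϖ) := by
          by_contra hc
          have h2 : (1 : A) - ϖ ∈ IsLocalRing.maximalIdeal A := hc
          apply hone
          have := Ideal.add_mem _ h2 hϖm
          simpa using this
        set e : Aˣ := he.unit with hedef
        set d : Aˣ := hd.unit with hddef
        have heval : (e : A) = 1 + t := he.unit_spec
        have hdval : (d : A) = 1 - ϖ := hd.unit_spec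
        set w : Aˣ := v * e⁻¹ with hwdef
        have hee : ((e⁻¹ : Aˣ) : A) * (e : A) = 1 := Units.inv_mul e
        have hwe : (w : A) * (e : A) = (v : A) := by
          rw [hwdef, Units.val_mul, mul_assoc, Units.inv_mul, mul_one]
        have hw1eq : (w : A) - 1 = t * ((ϖ - 1) * ((e⁻¹ : Aˣ) : A)) := by
          apply mul_right_cancel₀ (b := (e : A)) e.ne_zero
          linear_combination hwe + htv - heval - (t * (ϖ - 1)) * hee
        have hw1 : (w : A) - 1 ∈ (IsLocalRing.maximalIdeal A) ^ m := by
          rw [hw1eq]; exact Ideal.mul_mem_right _ _ htI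
        have he1 : (e : A) - 1 ∈ (IsLocalRing.maximalIdeal A) ^ m := by
          rw [heval]; simpa using htI
        set W : Kˣ := Units.map (algebraMap A K : A →* K) w with hW
        set E : Kˣ := Units.map (algebraMap A K : A →* K) e with hE
        set D : Kˣ := Units.map (algebraMap A K : A →* K) d with hD
        have hWval : (W : K) = algebraMap A K (w : A) := rfl
        have hEval : (E : K) = algebraMap A K (e : A) := rfl
        have hDval : (D : K) = algebraMap A K (d : A) := rfl
        have hWUm : W ∈ Um A K m := mem_Um_iff.mpr ⟨w, rfl, hw1⟩
        have hEUm : E ∈ Um A K m := mem_Um_iff.mpr ⟨e, rfl, he1⟩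
        have hx0WE : x 0 = W * E := by
          apply Units.ext
          rw [Units.val_mul, hWval, hEval, ← map_mul, hwe, hv]
        set X := Function.update x i T with hX
        have hXj : ∀ j, j ≠ i → X j = x j := fun j hj => Function.update_of_ne hj _ _
        have hX0 : X 0 = x 0 := hXj 0 (Ne.symm hi)
        have hXi : X i = T := Function.update_self i T x
        have hupd0 : Function.update X 0 (W * E) = X := by
          rw [show W * E = X 0 by rw [hX0, hx0WE]]
          exact Function.update_eq_self (0 : Fin (n+1)) X
        have hs0 := symbol_mul X 0 W E
        rw [hupd0] at hs0
        have gY : MilnorK.symbol (Function.update X 0 E) ∈ UmKM' A K m n := by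
          set Y := Function.update X 0 E with hY
          have hYi : Y i = T := by rw [hY, Function.update_of_ne hi, hXi]
          have hY0 : Y 0 = E := Function.update_self (0 : Fin (n+1)) E X
          have hupdY : Function.update Y i ((-1 : Kˣ) * -T) = Y := by
            rw [show (-1 : Kˣ) * -T = T by rw [neg_one_mul, neg_neg], ← hYi]
            exact Function.update_eq_self i Y
          have hsY := symbol_mul Y i (-1 : Kˣ) (-T)
          rw [hupdY] at hsY
          have eY : MilnorK.symbol (Function.update Y i (-T)) = 0 := by
            apply symbol_steinberg _ 0 i (Ne.symm hi)
            rw [Function.update_of_ne (Ne.symm hi), Function.update_self, hY0,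
              hEval, heval, Units.val_neg, hT, Units.val_mk0, map_add, map_one]
            ring
          have gY1 : MilnorK.symbol (Function.update Y i (-1 : Kˣ)) ∈ UmKM' A K m n := by
            apply gen_mem
            · rw [Function.update_of_ne (Ne.symm hi), hY0]; exact hEUm
            · intro j hj
              by_cases hji : j = i
              · rw [hji, Function.update_self]; exact neg_one_mem_unitGroup
              · rw [Function.update_of_ne hji, hY, Function.update_of_ne hj, hXj j hji]
                exact hunits j hj hji
          rw [eY, add_zero] at hsY
          rw [hsY]
          exact gY1
        have gZ : MilnorK.symbol (Function.update X 0 W) ∈ UmKM' A K m n := by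
          set Z := Function.update X 0 W with hZ
          have hZi : Z i = T := by rw [hZ, Function.update_of_ne hi, hXi]
          have hZ0 : Z 0 = W := Function.update_self (0 : Fin (n+1)) W X
          have hϖ1 : ϖ - 1 ≠ 0 := by
            intro hc
            exact hϖ.not_isUnit (by rw [show ϖ = 1 by linear_combination hc]; exact isUnit_one)
          have hw10 : (w : A) - 1 ≠ 0 := by
            rw [hw1eq]
            exact mul_ne_zero ht0 (mul_ne_zero hϖ1 (Units.ne_zero _))
          have h1W : (1 : K) - (W : K) ≠ 0 := by
            rw [hWval]
            intro hc
            apply hw10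
            apply inj
            rw [map_sub, map_one, map_zero]
            linear_combination -hc
          set U2 : Kˣ := Units.mk0 _ h1W with hU2
          have hA : ((1 : A) - (w : A)) * (e : A) = t * (d : A) := by
            rw [hdval]
            linear_combination (-(e : A)) * hw1eq - (t * (ϖ - 1)) * hee
          have hAK : ((1 : K) - algebraMap A K (w : A)) * algebraMap A K (e : A) =
              algebraMap A K t * algebraMap A K (d : A) := by
            have h5 := congrArg (algebraMap A K) hA
            rw [map_mul, map_mul, map_sub, map_one] at h5
            exact h5
          have hd0 : algebraMap A K (d : A) ≠ 0 := by
            rw [map_ne_zero_iff _ inj]; exact d.ne_zero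
          have hTdecomp : T = U2 * (E * D⁻¹) := by
            apply Units.ext
            rw [Units.val_mul, Units.val_mul, Units.val_inv_eq_inv_val, hU2, hT,
              Units.val_mk0, Units.val_mk0, hEval, hDval, hWval]
            rw [← mul_assoc, ← div_eq_mul_inv, eq_comm, div_eq_iff hd0]
            linear_combination hAK
          have hupdZ : Function.update Z i (U2 * (E * D⁻¹)) = Z := by
            rw [← hTdecomp, ← hZi]
            exact Function.update_eq_self i Z
          have hsZ := symbol_mul Z i U2 (E * D⁻¹)
          rw [hupdZ] at hsZ
          have eZ : MilnorK.symbol (Function.update Z i U2) = 0 := by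
            apply symbol_steinberg _ 0 i (Ne.symm hi)
            rw [Function.update_of_ne (Ne.symm hi), Function.update_self, hZ0, hU2,
              Units.val_mk0]
            ring
          have hsZ2 := symbol_mul Z i E (D⁻¹)
          have eD := symbol_inv Z i D
          have gZE : MilnorK.symbol (Function.update Z i E) ∈ UmKM' A K m n := by
            apply gen_mem
            · rw [Function.update_of_ne (Ne.symm hi), hZ0]; exact hWUm
            · intro j hj
              by_cases hji : j = i
              · rw [hji, Function.update_self]; exact ⟨e, rfl⟩
              · rw [Function.update_of_ne hji, hZ, Function.update_of_ne hj, hXj j hji]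
                exact hunits j hj hji
          have gZD : MilnorK.symbol (Function.update Z i D) ∈ UmKM' A K m n := by
            apply gen_mem
            · rw [Function.update_of_ne (Ne.symm hi), hZ0]; exact hWUm
            · intro j hj
              by_cases hji : j = i
              · rw [hji, Function.update_self]; exact ⟨d, rfl⟩
              · rw [Function.update_of_ne hji, hZ, Function.update_of_ne hj, hXj j hji]
                exact hunits j hj hji
          rw [eZ, zero_add, hsZ2, eD] at hsZ
          rw [hsZ]
          exact add_mem gZE (neg_mem gZD)
        rw [hs0]
        exact add_mem gZ gY
    rw [hs, e1, zero_add, e2, hsplit]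
    exact neg_mem (add_mem g1 gT)

lemma lemC {m n : ℕ} {ϖ : A} (hϖ : Irreducible ϖ) (PiU : Kˣ)
    (hPiUval : (PiU : K) = algebraMap A K ϖ) (hPiUnu : PiU ∉ unitGroup A K) :
    ∀ (N : ℕ) (x : Fin (n + 1) → Kˣ), x 0 ∈ Um A K (m + 1) →
      (∀ j : Fin (n + 1), j ≠ 0 → x j ∈ unitGroup A K ∨ x j = PiU) →
      (Finset.univ.filter (fun j : Fin (n + 1) => j ≠ 0 ∧ x j = PiU)).card ≤ N →
      MilnorK.symbol x ∈ UmKM' A K m n := by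
  intro N
  induction N with
  | zero =>
      intro x hx0 hgood hcard
      apply gen_mem
      · exact Um_mono hx0
      · intro j hj
        rcases hgood j hj with h | h
        · exact h
        · exfalso
          have hmem : j ∈ Finset.univ.filter (fun j : Fin (n + 1) => j ≠ 0 ∧ x j = PiU) :=
            Finset.mem_filter.mpr ⟨Finset.mem_univ j, hj, h⟩
          rw [Finset.card_eq_zero.mp (Nat.le_zero.mp hcard)] at hmem
          exact absurd hmem (Finset.notMem_empty j)
  | succ N ih =>
      intro x hx0 hgood hcard
      set S := Finset.univ.filter (fun j : Fin (n + 1) => j ≠ 0 ∧ x j = PiU) with hS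
      by_cases hle : S.card ≤ N
      · exact ih x hx0 hgood hle
      · have hcardEq : S.card = N + 1 := le_antisymm hcard (Nat.succ_le_of_lt (Nat.lt_of_not_le hle))
        by_cases h1 : S.card = 1
        · obtain ⟨i, hSi⟩ := Finset.card_eq_one.mp h1
          have hiS : i ∈ S := by rw [hSi]; exact Finset.mem_singleton_self i
          obtain ⟨-, hi0, hxiPiU⟩ := Finset.mem_filter.mp hiS
          apply lemB hϖ x i hi0 hx0
          · intro j hj hji
            rcases hgood j hj with h | h
            · exact h
            · exfalso
              apply hji
              have : j ∈ S := Finset.mem_filter.mpr ⟨Finset.mem_univ j, hj, h⟩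
              rw [hSi] at this
              exact Finset.mem_singleton.mp this
          · rw [hxiPiU, hPiUval]
        · have h2 : 1 < S.card := by omega
          obtain ⟨i, hiS, j, hjS, hij⟩ := Finset.one_lt_card.mp h2
          obtain ⟨-, hi0, hxiPiU⟩ := Finset.mem_filter.mp hiS
          obtain ⟨-, hj0, hxjPiU⟩ := Finset.mem_filter.mp hjS
          have hupd : Function.update x j ((-1 : Kˣ) * -PiU) = x := by
            rw [show (-1 : Kˣ) * -PiU = PiU by rw [neg_one_mul, neg_neg], ← hxjPiU]
            exact Function.update_eq_self j x
          have hs := symbol_mul x j (-1 : Kˣ) (-PiU)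
          rw [hupd] at hs
          have eneg : MilnorK.symbol (Function.update x j (-PiU)) = 0 := by
            apply symbol_of_neg _ i j hij
            rw [Function.update_self, Function.update_of_ne hij, hxiPiU,
              Units.val_neg]
          have hm1 : (-1 : Kˣ) ≠ PiU := by
            intro hc
            exact hPiUnu (hc ▸ neg_one_mem_unitGroup)
          have hmem1 : MilnorK.symbol (Function.update x j (-1 : Kˣ)) ∈
              UmKM' A K m n := by
            apply ih
            · rw [Function.update_of_ne (Ne.symm hj0)]; exact hx0
            · intro l hl
              by_cases hlj : l = j
              · rw [hlj, Function.update_self]; exact Or.inl neg_one_mem_unitGroup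
              · rw [Function.update_of_ne hlj]; exact hgood l hl
            · have hsub : (Finset.univ.filter
                  (fun l : Fin (n + 1) => l ≠ 0 ∧ Function.update x j (-1 : Kˣ) l = PiU)) ⊆
                  S.erase j := by
                intro l hl
                obtain ⟨-, hl0, hlPiU⟩ := Finset.mem_filter.mp hl
                have hlj : l ≠ j := by
                  intro hc
                  rw [hc, Function.update_self] at hlPiU
                  exact hm1 hlPiU
                rw [Function.update_of_ne hlj] at hlPiU
                exact Finset.mem_erase.mpr ⟨hlj, Finset.mem_filter.mpr ⟨Finset.mem_univ l, hl0, hlPiU⟩⟩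
              calc (Finset.univ.filter _).card ≤ (S.erase j).card := Finset.card_le_card hsub
                _ = S.card - 1 := Finset.card_erase_of_mem hjS
                _ ≤ N := by omega
          rw [hs, eneg, add_zero]
          exact hmem1

lemma lemD {m n : ℕ} {ϖ : A} (hϖ : Irreducible ϖ) (PiU : Kˣ)
    (hPiUval : (PiU : K) = algebraMap A K ϖ) (hPiUnu : PiU ∉ unitGroup A K) :
    ∀ (N : ℕ) (x : Fin (n + 1) → Kˣ), x 0 ∈ Um A K (m + 1) →
      (Finset.univ.filter (fun j : Fin (n + 1) =>
        j ≠ 0 ∧ ¬(x j ∈ unitGroup A K ∨ x j = PiU))).card ≤ N →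
      MilnorK.symbol x ∈ UmKM' A K m n := by
  intro N
  induction N with
  | zero =>
      intro x hx0 hcard
      apply lemC hϖ PiU hPiUval hPiUnu
        ((Finset.univ.filter (fun j : Fin (n + 1) => j ≠ 0 ∧ x j = PiU)).card) x hx0 _ le_rfl
      intro j hj
      by_contra hc
      have hmem : j ∈ Finset.univ.filter (fun j : Fin (n + 1) =>
          j ≠ 0 ∧ ¬(x j ∈ unitGroup A K ∨ x j = PiU)) :=
        Finset.mem_filter.mpr ⟨Finset.mem_univ j, hj, hc⟩
      rw [Finset.card_eq_zero.mp (Nat.le_zero.mp hcard)] at hmem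
      exact absurd hmem (Finset.notMem_empty j)
  | succ N ih =>
      intro x hx0 hcard
      set S := Finset.univ.filter (fun j : Fin (n + 1) =>
        j ≠ 0 ∧ ¬(x j ∈ unitGroup A K ∨ x j = PiU)) with hS
      by_cases hle : S.card ≤ N
      · exact ih x hx0 hle
      · have hpos : 0 < S.card := by omega
        obtain ⟨j, hjS⟩ := Finset.card_pos.mp hpos
        obtain ⟨-, hj0, hjbad⟩ := Finset.mem_filter.mp hjS
        obtain ⟨c, k, hck⟩ := exists_decomp hϖ (x j)
        set C : Kˣ := Units.map (algebraMap A K : A →* K) c with hC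
        have hxj : x j = C * PiU ^ k := by
          apply Units.ext
          rw [Units.val_mul, Units.val_zpow_eq_zpow_val, hPiUval, hck]
          rfl
        have hupd : Function.update x j (C * PiU ^ k) = x := by
          rw [← hxj]; exact Function.update_eq_self j x
        have hs := symbol_mul x j C (PiU ^ k)
        rw [hupd] at hs
        have hz := symbol_zpow x j PiU k
        have hcount : ∀ y : Kˣ, (y ∈ unitGroup A K ∨ y = PiU) →
            (Finset.univ.filter (fun l : Fin (n + 1) =>
              l ≠ 0 ∧ ¬(Function.update x j y l ∈ unitGroup A K ∨
                Function.update x j y l = PiU))).card ≤ N := by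
          intro y hy
          have hsub : (Finset.univ.filter (fun l : Fin (n + 1) =>
              l ≠ 0 ∧ ¬(Function.update x j y l ∈ unitGroup A K ∨
                Function.update x j y l = PiU))) ⊆ S.erase j := by
            intro l hl
            obtain ⟨-, hl0, hlbad⟩ := Finset.mem_filter.mp hl
            have hlj : l ≠ j := by
              intro hc2
              rw [hc2, Function.update_self] at hlbad
              exact hlbad hy
            rw [Function.update_of_ne hlj] at hlbad
            exact Finset.mem_erase.mpr ⟨hlj,
              Finset.mem_filter.mpr ⟨Finset.mem_univ l, hl0, hlbad⟩⟩
          calc (Finset.univ.filter _).card ≤ (S.erase j).card := Finset.card_le_card hsub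
            _ = S.card - 1 := Finset.card_erase_of_mem hjS
            _ ≤ N := by omega
        have hmemC : MilnorK.symbol (Function.update x j C) ∈ UmKM' A K m n := by
          apply ih
          · rw [Function.update_of_ne (Ne.symm hj0)]; exact hx0
          · exact hcount C (Or.inl ⟨c, rfl⟩)
        have hmemPiU : MilnorK.symbol (Function.update x j PiU) ∈ UmKM' A K m n := by
          apply ih
          · rw [Function.update_of_ne (Ne.symm hj0)]; exact hx0
          · exact hcount PiU (Or.inr rfl)
        rw [hs, hz]
        exact add_mem hmemC (AddSubgroup.zsmul_mem _ hmemPiU k)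


end Aux

/-- Let `K` be a Henselian discrete valuation field and `m ≥ 0`,
`n ≥ 1` integers.  Then there are inclusions of subgroups of the Milnor K-group:
`U_{m+1} K^M_n(K) ⊆ U'_m K^M_n(K) ⊆ U_m K^M_n(K)`. -/
theorem milnorK_unit_filtration_inclusions
    (A : Type*) [CommRing A] [IsDomain A] [IsDiscreteValuationRing A]
    [HenselianLocalRing A]
    (K : Type*) [Field K] [Algebra A K] [IsFractionRing A K]
    (m n : ℕ) :
    UmKM A K (m + 1) n ≤ UmKM' A K m n ∧ UmKM' A K m n ≤ UmKM A K m n := by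
  constructor
  · obtain ⟨ϖ, hϖ⟩ := IsDiscreteValuationRing.exists_irreducible A
    have inj : Function.Injective (algebraMap A K) := IsFractionRing.injective A K
    have hπ0 : algebraMap A K ϖ ≠ 0 := by
      rw [map_ne_zero_iff _ inj]; exact hϖ.ne_zero
    set PiU : Kˣ := Units.mk0 _ hπ0 with hPiU
    have hPiUnu : PiU ∉ unitGroup A K := by
      rintro ⟨c, hc⟩
      apply hϖ.not_isUnit
      have hcv : algebraMap A K (c : A) = algebraMap A K ϖ := by
        have h2 := congrArg (Units.val) hc
        rw [hPiU] at h2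
        simpa using h2
      rw [← inj hcv]
      exact c.isUnit
    refine (AddSubgroup.closure_le _).mpr ?_
    rintro z ⟨x, hx0, rfl⟩
    exact lemD hϖ PiU rfl hPiUnu _ x hx0 le_rfl
  · refine (AddSubgroup.closure_le _).mpr ?_
    rintro z ⟨x, hx0, hu, rfl⟩
    exact AddSubgroup.subset_closure ⟨x, hx0, rfl⟩
end

section
/- Let K be a discrete valuation field with valuation ring O_K and uniformizer π, and let m ≥ 0. Then for any unit u ∈ O_K^×, the symbol {1 + uπ^{m+1}, π} in K^M_2(K) lies in the subgroup U'_m K^M_2(K) generated by symbols {a, v} with a ∈ 1 + 𝔪_K^m and v ∈ O_K^×. -/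
section Helpers

variable {K : Type*} [Field K]

private lemma upd0 (a y c : Kˣ) : Function.update ![a,c] 0 y = ![y,c] := by
  funext i; fin_cases i <;> simp

private lemma upd1 (a y c : Kˣ) : Function.update ![a,c] 1 y = ![a,y] := by
  funext i; fin_cases i <;> simp

lemma MilnorK.symbol_mul_left (a b c : Kˣ) :
    MilnorK.symbol ![a*b, c] = MilnorK.symbol ![a,c] + MilnorK.symbol (K := K) ![b,c] := by
  have hmem : FreeAbelianGroup.of ![a*b,c] - FreeAbelianGroup.of ![a,c]
      - FreeAbelianGroup.of ![b,c] ∈ MilnorRel K 2 := by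
    apply AddSubgroup.subset_closure
    exact Or.inl ⟨![a,c], 0, a, b, by rw [upd0, upd0, upd0]⟩
  have h0 : (QuotientAddGroup.mk (FreeAbelianGroup.of ![a*b,c] - FreeAbelianGroup.of ![a,c]
      - FreeAbelianGroup.of ![b,c]) : MilnorK K 2) = 0 :=
    (QuotientAddGroup.eq_zero_iff _).2 hmem
  rw [QuotientAddGroup.mk_sub, QuotientAddGroup.mk_sub, sub_sub, sub_eq_zero] at h0
  exact h0

lemma MilnorK.symbol_mul_right (a b c : Kˣ) :
    MilnorK.symbol ![a, b*c] = MilnorK.symbol ![a,b] + MilnorK.symbol (K := K) ![a,c] := by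
  have hmem : FreeAbelianGroup.of ![a,b*c] - FreeAbelianGroup.of ![a,b]
      - FreeAbelianGroup.of ![a,c] ∈ MilnorRel K 2 := by
    apply AddSubgroup.subset_closure
    exact Or.inl ⟨![a,b], 1, b, c, by rw [upd1, upd1, upd1]⟩
  have h0 : (QuotientAddGroup.mk (FreeAbelianGroup.of ![a,b*c] - FreeAbelianGroup.of ![a,b]
      - FreeAbelianGroup.of ![a,c]) : MilnorK K 2) = 0 :=
    (QuotientAddGroup.eq_zero_iff _).2 hmem
  rw [QuotientAddGroup.mk_sub, QuotientAddGroup.mk_sub, sub_sub, sub_eq_zero] at h0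
  exact h0

lemma MilnorK.symbol_steinberg (a b : Kˣ) (h : (a:K) + (b:K) = 1) :
    MilnorK.symbol ![a,b] = 0 := by
  apply (QuotientAddGroup.eq_zero_iff _).2
  apply AddSubgroup.subset_closure
  exact Or.inr ⟨![a,b], 0, 1, by decide, by simpa using h, rfl⟩

lemma MilnorK.symbol_one_right (a : Kˣ) : MilnorK.symbol (K := K) ![a, 1] = 0 := by
  have h := MilnorK.symbol_mul_right (K := K) a 1 1
  rw [mul_one] at h
  exact add_eq_left.mp h.symm

lemma MilnorK.symbol_pow_right (a b : Kˣ) (n : ℕ) :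
    MilnorK.symbol (K := K) ![a, b^n] = n • MilnorK.symbol ![a,b] := by
  induction n with
  | zero => simpa using MilnorK.symbol_one_right a
  | succ n ih => rw [pow_succ, MilnorK.symbol_mul_right, ih, succ_nsmul]

private lemma one_add_isUnit {A : Type*} [CommRing A] [IsLocalRing A] {a : A}
    (h : a ∈ IsLocalRing.maximalIdeal A) : IsUnit (1 + a) := by
  by_contra hn
  have h2 : 1 + a ∈ IsLocalRing.maximalIdeal A := by
    rwa [IsLocalRing.mem_maximalIdeal, mem_nonunits_iff]
  have h1 : (1:A) ∈ IsLocalRing.maximalIdeal A := by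
    have := Submodule.sub_mem _ h2 h
    simpa using this
  exact (IsLocalRing.maximalIdeal.isMaximal A).ne_top
    (Ideal.eq_top_of_isUnit_mem _ h1 isUnit_one)

end Helpers

section MainHelpers

variable (A : Type*) [CommRing A] [IsDomain A] [IsDiscreteValuationRing A]
variable (K : Type*) [Field K] [Algebra A K] [IsFractionRing A K]

/-- The map `Aˣ →* Kˣ`. -/
noncomputable def mapU : Aˣ →* Kˣ := Units.map (algebraMap A K : A →* K)

@[simp] lemma mapU_val (V : Aˣ) : ((mapU A K V : Kˣ) : K) = algebraMap A K (V : A) := rfl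

lemma mapU_mem_unitGroup (V : Aˣ) : mapU A K V ∈ unitGroup A K := ⟨V, rfl⟩

lemma mem_Um_of (m : ℕ) (x : Kˣ) (V : Aˣ) (h1 : algebraMap A K (V : A) = (x : K))
    (h2 : ((V : A) - 1) ∈ (IsLocalRing.maximalIdeal A) ^ m) : x ∈ Um A K m :=
  Subgroup.subset_closure ⟨V, h1, h2⟩

lemma symbol_mem_UmKM' (m : ℕ) (a c : Kˣ) (ha : a ∈ Um A K m) (hc : c ∈ unitGroup A K) :
    MilnorK.symbol ![a, c] ∈ UmKM' A K m 1 := by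
  apply AddSubgroup.subset_closure
  refine ⟨![a,c], by simpa using ha, ?_, rfl⟩
  intro i hi
  fin_cases i
  · simp at hi
  · simpa using hc

end MainHelpers


/-- Let `K` be a discrete valuation field with valuation ring `O_K` and
uniformizer `π`, and let `m ≥ 0`.  Then for any unit `u ∈ O_K^×`, the symbol
`{1 + u π^{m+1}, π}` in `K^M_2(K)` lies in the subgroup `U'_m K^M_2(K)` generated by the
symbols `{a, v}` with `a ∈ 1 + 𝔪_K^m` and `v ∈ O_K^×`. -/
theorem milnorK_symbol_one_add_unit_pi_pow_mem
    (A : Type*) [CommRing A] [IsDomain A] [IsDiscreteValuationRing A]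
    (K : Type*) [Field K] [Algebra A K] [IsFractionRing A K]
    (m : ℕ) (u : Aˣ) (π : A) (hπ : Irreducible π)
    (w : Kˣ) (hw : (w : K) = 1 + algebraMap A K ((u : A) * π ^ (m + 1)))
    (p : Kˣ) (hp : (p : K) = algebraMap A K π) :
    MilnorK.symbol ![w, p] ∈ UmKM' A K m 1 := by
  have hπm : π ∈ IsLocalRing.maximalIdeal A := by
    rw [IsLocalRing.mem_maximalIdeal, mem_nonunits_iff]; exact hπ.not_isUnit
  have hπpow : ∀ k : ℕ, π ^ (k+1) ∈ IsLocalRing.maximalIdeal A := fun k =>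
    Ideal.pow_le_self (Nat.succ_ne_zero k) (Ideal.pow_mem_pow hπm (k+1))
  -- Steinberg relation for `w`
  have hSt : MilnorK.symbol ![w, mapU A K (-u) * p^(m+1)] = 0 := by
    apply MilnorK.symbol_steinberg
    have hc : ((mapU A K (-u) * p^(m+1) : Kˣ) : K) = - algebraMap A K ((u:A) * π^(m+1)) := by
      simp only [Units.val_mul, Units.val_pow_eq_pow_val, mapU_val, Units.val_neg, hp,
        map_mul, map_pow, map_neg]
      ring
    rw [hw, hc]; ring
  have hE1 : MilnorK.symbol ![w, mapU A K (-u)] + (m+1) • MilnorK.symbol ![w, p] = 0 := by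
    rw [← MilnorK.symbol_pow_right, ← MilnorK.symbol_mul_right]; exact hSt
  -- `w` lies in `U_m`
  have hwu : IsUnit ((1:A) + (u:A) * π^(m+1)) :=
    one_add_isUnit (Ideal.mul_mem_left _ _ (hπpow m))
  have hwUm : w ∈ Um A K m := by
    refine mem_Um_of A K m w hwu.unit ?_ ?_
    · rw [hwu.unit_spec, map_add, map_one, hw]
    · rw [hwu.unit_spec]
      have : (u:A) * π^(m+1) ∈ (IsLocalRing.maximalIdeal A)^m :=
        Ideal.pow_le_pow_right (Nat.le_succ m)
          (Ideal.mul_mem_left _ _ (Ideal.pow_mem_pow hπm (m+1)))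
      simpa using this
  have hXmem : MilnorK.symbol ![w, mapU A K (-u)] ∈ UmKM' A K m 1 :=
    symbol_mem_UmKM' A K m _ _ hwUm (mapU_mem_unitGroup A K (-u))
  cases m with
  | zero =>
    have hS : MilnorK.symbol ![w, p] = - MilnorK.symbol ![w, mapU A K (-u)] := by
      have := hE1
      rw [one_nsmul] at this
      exact (neg_eq_of_add_eq_zero_right this).symm
    rw [hS]
    exact neg_mem hXmem
  | succ m =>
    -- the key factorization 1 + uπ^{m+2} = (1 + v't)(1 + v''t) with t = -(uπ^{m+1})
    have hb : IsUnit (-(1+π)) := (one_add_isUnit hπm).neg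
    have htm : (-((u:A) * π^(m+1)) : A) ∈ (IsLocalRing.maximalIdeal A)^(m+1) :=
      neg_mem (Ideal.mul_mem_left _ _ (Ideal.pow_mem_pow hπm (m+1)))
    have ht : (-((u:A) * π^(m+1)) : A) ∈ IsLocalRing.maximalIdeal A :=
      Ideal.pow_le_self (Nat.succ_ne_zero m) htm
    have hsu : IsUnit ((1:A) + (-((u:A) * π^(m+1))) * (-(1+π))) :=
      one_add_isUnit (Ideal.mul_mem_right _ _ ht)
    obtain ⟨v', hv'⟩ : ∃ v' : Aˣ,
        (v':A) * ((1:A) + (-((u:A) * π^(m+1))) * (-(1+π))) = 1 :=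
      ⟨hsu.unit⁻¹, by have h := hsu.unit.inv_mul; rwa [hsu.unit_spec] at h⟩
    set v'' : Aˣ := hb.unit with hv''def
    have hv'' : (v'' : A) = -(1+π) := hb.unit_spec
    have key : ((1:A) + (v':A) * (-((u:A) * π^(m+1)))) *
        ((1:A) + (-(1+π)) * (-((u:A) * π^(m+1)))) = 1 + (u:A) * π^(m+1+1) := by
      linear_combination (-((u:A) * π^(m+1))) * hv'
    have hw'm : ((v':A) * (-((u:A) * π^(m+1)))) ∈ (IsLocalRing.maximalIdeal A)^(m+1) :=
      Ideal.mul_mem_left _ _ htm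
    have hw''m : ((-(1+π)) * (-((u:A) * π^(m+1)))) ∈ (IsLocalRing.maximalIdeal A)^(m+1) :=
      Ideal.mul_mem_left _ _ htm
    have hw'u : IsUnit ((1:A) + (v':A) * (-((u:A) * π^(m+1)))) :=
      one_add_isUnit (Ideal.pow_le_self (Nat.succ_ne_zero m) hw'm)
    have hw''u : IsUnit ((1:A) + (-(1+π)) * (-((u:A) * π^(m+1)))) :=
      one_add_isUnit (Ideal.pow_le_self (Nat.succ_ne_zero m) hw''m)
    -- w = W' * W''
    have hwmul : w = mapU A K hw'u.unit * mapU A K hw''u.unit := by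
      apply Units.ext
      rw [hw]
      simp only [Units.val_mul, mapU_val]
      rw [hw'u.unit_spec, hw''u.unit_spec, ← map_mul, key, map_add, map_one]
    have hS4 : MilnorK.symbol ![w, p] =
        MilnorK.symbol ![mapU A K hw'u.unit, p] + MilnorK.symbol ![mapU A K hw''u.unit, p] := by
      rw [hwmul]; exact MilnorK.symbol_mul_left _ _ _
    -- Steinberg for W'
    have hstB' : MilnorK.symbol ![mapU A K hw'u.unit, mapU A K (v' * u) * p^(m+1)] = 0 := by
      apply MilnorK.symbol_steinberg
      have hc : ((mapU A K hw'u.unit : Kˣ) : K) + ((mapU A K (v'*u) * p^(m+1) : Kˣ) : K)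
          = algebraMap A K (((1:A) + (v':A) * (-((u:A) * π^(m+1))))
              + ((v':A) * (u:A)) * π^(m+1)) := by
        simp only [Units.val_mul, Units.val_pow_eq_pow_val, mapU_val, hp,
          hw'u.unit_spec, map_add, map_mul, map_pow, map_one, map_neg]
        try ring
      rw [hc, show ((1:A) + (v':A) * (-((u:A) * π^(m+1)))) + ((v':A) * (u:A)) * π^(m+1)
        = (1:A) by ring, map_one]
    have hstB'' : MilnorK.symbol ![mapU A K hw''u.unit, mapU A K (v'' * u) * p^(m+1)] = 0 := by
      apply MilnorK.symbol_steinberg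
      have hc : ((mapU A K hw''u.unit : Kˣ) : K) + ((mapU A K (v''*u) * p^(m+1) : Kˣ) : K)
          = algebraMap A K (((1:A) + (-(1+π)) * (-((u:A) * π^(m+1))))
              + ((-(1+π)) * (u:A)) * π^(m+1)) := by
        simp only [Units.val_mul, Units.val_pow_eq_pow_val, mapU_val, hp,
          hw''u.unit_spec, hv'', map_add, map_mul, map_pow, map_one, map_neg]
        try ring
      rw [hc, show ((1:A) + (-(1+π)) * (-((u:A) * π^(m+1)))) + ((-(1+π)) * (u:A)) * π^(m+1)
        = (1:A) by ring, map_one]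
    have hEB' : MilnorK.symbol ![mapU A K hw'u.unit, mapU A K (v'*u)]
        + (m+1) • MilnorK.symbol ![mapU A K hw'u.unit, p] = 0 := by
      rw [← MilnorK.symbol_pow_right, ← MilnorK.symbol_mul_right]; exact hstB'
    have hEB'' : MilnorK.symbol ![mapU A K hw''u.unit, mapU A K (v''*u)]
        + (m+1) • MilnorK.symbol ![mapU A K hw''u.unit, p] = 0 := by
      rw [← MilnorK.symbol_pow_right, ← MilnorK.symbol_mul_right]; exact hstB''
    have e1 : (m+1+1) • MilnorK.symbol ![w, p] = - MilnorK.symbol ![w, mapU A K (-u)] :=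
      (neg_eq_of_add_eq_zero_right hE1).symm
    have e' : (m+1) • MilnorK.symbol ![mapU A K hw'u.unit, p]
        = - MilnorK.symbol ![mapU A K hw'u.unit, mapU A K (v'*u)] :=
      (neg_eq_of_add_eq_zero_right hEB').symm
    have e'' : (m+1) • MilnorK.symbol ![mapU A K hw''u.unit, p]
        = - MilnorK.symbol ![mapU A K hw''u.unit, mapU A K (v''*u)] :=
      (neg_eq_of_add_eq_zero_right hEB'').symm
    have h5 := succ_nsmul (MilnorK.symbol (K := K) ![w, p]) (m+1)
    rw [e1] at h5
    nth_rewrite 1 [hS4] at h5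
    rw [smul_add, e', e''] at h5
    have hfin : MilnorK.symbol (K := K) ![w, p]
        = - MilnorK.symbol ![w, mapU A K (-u)]
          + MilnorK.symbol ![mapU A K hw'u.unit, mapU A K (v'*u)]
          + MilnorK.symbol ![mapU A K hw''u.unit, mapU A K (v''*u)] := by
      rw [h5]; abel
    rw [hfin]
    have hW'Um : mapU A K hw'u.unit ∈ Um A K (m+1) := by
      refine mem_Um_of A K (m+1) _ hw'u.unit rfl ?_
      rw [hw'u.unit_spec]
      simpa using hw'm
    have hW''Um : mapU A K hw''u.unit ∈ Um A K (m+1) := by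
      refine mem_Um_of A K (m+1) _ hw''u.unit rfl ?_
      rw [hw''u.unit_spec]
      simpa using hw''m
    exact add_mem (add_mem (neg_mem hXmem)
      (symbol_mem_UmKM' A K (m+1) _ _ hW'Um (mapU_mem_unitGroup A K (v'*u))))
      (symbol_mem_UmKM' A K (m+1) _ _ hW''Um (mapU_mem_unitGroup A K (v''*u)))
end

section
/- Let 0 → G' → G → G'' → 0 be a short exact sequence of topological abelian groups, each of which is either profinite or discrete, with continuous open maps. Then the sequence of Pontryagin duals 0 → (G'')^∨ → G^∨ → (G')^∨ → 0 is exact, where A^∨ = Hom_cont(A, ℚ/ℤ). -/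
/-- The discrete group `ℚ/ℤ`. -/
def QZ : Type := ℚ ⧸ AddSubgroup.zmultiples (1 : ℚ)

noncomputable instance : AddCommGroup QZ :=
  inferInstanceAs (AddCommGroup (ℚ ⧸ AddSubgroup.zmultiples (1 : ℚ)))

instance : TopologicalSpace QZ := ⊥

instance : DiscreteTopology QZ := ⟨rfl⟩

/-- A topological abelian group that is either profinite or discrete. -/
def ProfiniteOrDiscrete (G : Type*) [TopologicalSpace G] : Prop :=
  (CompactSpace G ∧ TotallyDisconnectedSpace G ∧ T2Space G) ∨ DiscreteTopology G

noncomputable instance : DivisibleBy QZ ℤ :=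
  inferInstanceAs (DivisibleBy (ℚ ⧸ AddSubgroup.zmultiples (1 : ℚ)) ℤ)

/-- A hom of topological additive groups whose kernel contains an open neighborhood of `0`
into a discrete group is continuous. -/
lemma continuous_of_isOpen_subset_ker {G H : Type*} [AddCommGroup G] [AddCommGroup H]
    [TopologicalSpace G] [IsTopologicalAddGroup G] [TopologicalSpace H] [DiscreteTopology H]
    (χ : G →+ H) (U : Set G) (hU : IsOpen U) (h0 : (0 : G) ∈ U)
    (hker : ∀ x ∈ U, χ x = 0) : Continuous χ := by
  apply continuous_of_continuousAt_zero χ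
  rw [ContinuousAt, map_zero]
  intro s hs
  rw [Filter.mem_map]
  refine Filter.mem_of_superset (hU.mem_nhds h0) ?_
  intro x hx
  simp only [Set.mem_preimage, hker x hx]
  exact mem_of_mem_nhds hs

/-- Let `0 → G' → G → G'' → 0` be a short exact sequence of topological
abelian groups, each of which is either profinite or discrete, with continuous open maps.
Then the sequence of Pontryagin duals `0 → (G'')^∨ → G^∨ → (G')^∨ → 0` is exact, where
`A^∨ = Hom_cont(A, ℚ/ℤ)`:
(i) precomposition with `g` is injective on continuous characters;
(ii) a continuous character of `G` vanishes on the image of `f` iff it factors through a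
continuous character of `G''`;
(iii) every continuous character of `G'` extends to a continuous character of `G`. -/
theorem pontryagin_dual_short_exact
    {G' G G'' : Type*}
    [AddCommGroup G'] [AddCommGroup G] [AddCommGroup G'']
    [TopologicalSpace G'] [TopologicalSpace G] [TopologicalSpace G'']
    [IsTopologicalAddGroup G'] [IsTopologicalAddGroup G] [IsTopologicalAddGroup G'']
    (hG' : ProfiniteOrDiscrete G') (hG : ProfiniteOrDiscrete G)
    (hG'' : ProfiniteOrDiscrete G'')
    (f : G' →+ G) (g : G →+ G'')
    (hfc : Continuous f) (hgc : Continuous g)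
    (hfo : IsOpenMap f) (hgo : IsOpenMap g)
    (hfinj : Function.Injective f) (hgsurj : Function.Surjective g)
    (hexact : f.range = g.ker) :
    (∀ χ'' : G'' →+ QZ, Continuous χ'' → χ''.comp g = 0 → χ'' = 0) ∧
    (∀ χ : G →+ QZ, Continuous χ →
      (χ.comp f = 0 ↔ ∃ χ'' : G'' →+ QZ, Continuous χ'' ∧ χ''.comp g = χ)) ∧
    (∀ χ' : G' →+ QZ, Continuous χ' →
      ∃ χ : G →+ QZ, Continuous χ ∧ χ.comp f = χ') := by
  refine ⟨?_, ?_, ?_⟩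
  · -- (i) injectivity
    intro χ'' _ h
    ext y
    obtain ⟨x, rfl⟩ := hgsurj y
    exact DFunLike.congr_fun h x
  · -- (ii) exactness in the middle
    intro χ hχc
    constructor
    · intro h
      have hker : g.ker ≤ χ.ker := by
        intro x hx
        rw [← hexact] at hx
        obtain ⟨y, rfl⟩ := hx
        exact DFunLike.congr_fun h y
      set e := QuotientAddGroup.quotientKerEquivOfSurjective g hgsurj with he
      refine ⟨(QuotientAddGroup.lift g.ker χ hker).comp e.symm.toAddMonoidHom, ?_, ?_⟩
      · -- continuity of χ''
        have hcomp : ∀ x : G,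
            ((QuotientAddGroup.lift g.ker χ hker).comp e.symm.toAddMonoidHom) (g x) = χ x := by
          intro x
          have h1 : e.symm (g x) = QuotientAddGroup.mk x := by
            rw [AddEquiv.symm_apply_eq]
            rfl
          simp [h1]
        rw [continuous_def]
        intro s hs
        have : (((QuotientAddGroup.lift g.ker χ hker).comp e.symm.toAddMonoidHom : G'' →+ QZ) :
            G'' → QZ) ⁻¹' s = g '' (χ ⁻¹' s) := by
          ext y
          constructor
          · intro hy
            obtain ⟨x, rfl⟩ := hgsurj y
            exact ⟨x, by rwa [Set.mem_preimage, ← hcomp x], rfl⟩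
          · rintro ⟨x, hx, rfl⟩
            rw [Set.mem_preimage, hcomp x]
            exact hx
        rw [this]
        exact hgo _ (hχc.isOpen_preimage s hs)
      · ext x
        have h1 : e.symm (g x) = QuotientAddGroup.mk x := by
          rw [AddEquiv.symm_apply_eq]
          rfl
        simp [h1]
    · rintro ⟨χ'', _, rfl⟩
      ext y
      have : g (f y) = 0 := by
        rw [← AddMonoidHom.mem_ker, ← hexact]
        exact ⟨y, rfl⟩
      simp [this]
  · -- (iii) surjectivity onto the dual of G'
    intro χ' hχ'c
    obtain ⟨χ, hχf⟩ := (Module.Baer.of_divisible QZ).extension_property_addMonoidHom f hfinj χ'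
    refine ⟨χ, ?_, hχf⟩
    refine continuous_of_isOpen_subset_ker χ (f '' ((χ' : G' → QZ) ⁻¹' {0}))
      (hfo _ (hχ'c.isOpen_preimage _ (isOpen_discrete _))) ⟨0, by simp, map_zero f⟩ ?_
    rintro x ⟨y, hy, rfl⟩
    have := DFunLike.congr_fun hχf y
    simp only [AddMonoidHom.comp_apply] at this
    rw [this]
    simpa using hy
end

section
/- Let G be a topological abelian group that is either profinite or discrete. Then the evaluation map ev_G : G → (G^∨)^∨, sending g to the character χ ↦ χ(g), is injective. -/
/-- A character into `AddCircle (1 : ℚ)` viewed as a character into `QZ`. -/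
def charToQZ {G : Type*} [AddCommGroup G] (c : G →+ AddCircle (1 : ℚ)) : G →+ QZ := c

lemma charToQZ_apply {G : Type*} [AddCommGroup G] (c : G →+ AddCircle (1 : ℚ)) (x : G) :
    charToQZ c x = c x := rfl

lemma charToQZ_zero_iff {G : Type*} [AddCommGroup G] (c : G →+ AddCircle (1 : ℚ)) (x : G) :
    charToQZ c x = 0 ↔ c x = 0 := Iff.rfl

/-- Let `G` be a topological abelian group that is either profinite or
discrete.  Then the evaluation map `ev_G : G → (G^∨)^∨`, sending `g` to the character
`χ ↦ χ(g)` on the group `G^∨` of continuous characters `G → ℚ/ℤ`, is injective; i.e. if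
every continuous character kills `g`, then `g = 0`. -/
theorem evaluation_map_injective_profinite_or_discrete
    (G : Type*) [AddCommGroup G] [TopologicalSpace G] [IsTopologicalAddGroup G] [T2Space G]
    (hG : (CompactSpace G ∧ TotallyDisconnectedSpace G) ∨ DiscreteTopology G) :
    Function.Injective
      (fun (g : G) => fun (χ : {χ : G →+ QZ // Continuous χ}) => (χ : G →+ QZ) g) := by
  have key : ∀ g : G, (∀ χ : G →+ QZ, Continuous χ → χ g = 0) → g = 0 := by
    intro g hg
    by_contra hg0
    rcases hG with ⟨hc, htd⟩ | hd
    · -- profinite case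
      obtain ⟨W, hW, h0W, hgW⟩ :=
        exists_isClopen_of_totally_separated (show (0 : G) ≠ g from fun h => hg0 h.symm)
      obtain ⟨U, hU⟩ :=
        IsTopologicalAddGroup.exist_openAddSubgroup_sub_clopen_nhds_of_zero hW h0W
      haveI : DiscreteTopology (G ⧸ U.toAddSubgroup) :=
        QuotientAddGroup.discreteTopology U.isOpen
      have hgQ : (QuotientAddGroup.mk g : G ⧸ U.toAddSubgroup) ≠ 0 := by
        intro h
        exact hgW (hU ((QuotientAddGroup.eq_zero_iff g).mp h))
      obtain ⟨c, hcne⟩ := CharacterModule.exists_character_apply_ne_zero_of_ne_zero hgQ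
      refine hcne ?_
      have hmkc : Continuous (QuotientAddGroup.mk' U.toAddSubgroup) := continuous_quotient_mk'
      have hcont : Continuous (charToQZ ((c : (G ⧸ U.toAddSubgroup) →+ AddCircle (1 : ℚ)).comp
          (QuotientAddGroup.mk' U.toAddSubgroup))) :=
        (continuous_of_discreteTopology (α := G ⧸ U.toAddSubgroup) (β := QZ)).comp hmkc
      have h1 := hg (charToQZ ((c : (G ⧸ U.toAddSubgroup) →+ AddCircle (1 : ℚ)).comp
          (QuotientAddGroup.mk' U.toAddSubgroup))) hcont
      exact (charToQZ_zero_iff _ _).mp h1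
    · -- discrete case
      obtain ⟨c, hcne⟩ := CharacterModule.exists_character_apply_ne_zero_of_ne_zero hg0
      refine hcne ?_
      exact (charToQZ_zero_iff _ _).mp
        (hg (charToQZ (c : G →+ AddCircle (1 : ℚ))) continuous_of_discreteTopology)
  intro a b hab
  have hab0 : a - b = 0 := by
    refine key _ fun χ hχ => ?_
    have h := congrFun hab ⟨χ, hχ⟩
    simp only at h
    rw [map_sub, h, sub_self]
  exact sub_eq_zero.mp hab0
end
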